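/- Let n ≥ 1 be an integer, b ≥ 0 a real number, and λ > 0 a real number. Set μ'' := 2λ(n + b) + λ². Then the 3×3 real matrix M := μ''·I + A, where A has rows (λ, 0, −λ^{3/2}), (0, −λ, λ^{3/2}), (−λ^{−1/2}(b+2n), λ^{−1/2}·b, 2n), has characteristic polynomial (X − μ'')·(X − (μ'' + n + t))·(X − (μ'' + n − t)) where t := √(n² + 2λ(n+b) + λ²); in particular its eigenvalues are μ'' and μ'' + n ± √(n² + 2λ(n+b) + λ²). -/

import Mathlib

open Polynomial

/-- The matrix of the Laplacian on 1-forms on the double Heisenberg group `D^{4n+2}`,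
restricted to the invariant subspace spanned by `Σ w_j`, `Σ w_j'`, `λ₁τ^{w₁} + λ₂τ^{w₂}`,
has characteristic polynomial `(X − μ'')(X − (μ'' + n + t))(X − (μ'' + n − t))` with
`t = √(n² + 2λ(n+b) + λ²)`; in particular its eigenvalues are `μ''` and `μ'' + n ± t`. -/
theorem double_heisenberg_laplacian_one_forms_charpoly (n : ℕ) (hn : 1 ≤ n) (b lam : ℝ)
    (hb : 0 ≤ b) (hlam : 0 < lam)
    (μ'' : ℝ) (hμ : μ'' = 2 * lam * (n + b) + lam ^ 2)
    (t : ℝ) (ht : t = Real.sqrt ((n : ℝ) ^ 2 + 2 * lam * (n + b) + lam ^ 2))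
    (M : Matrix (Fin 3) (Fin 3) ℝ)
    (hM : M = μ'' • (1 : Matrix (Fin 3) (Fin 3) ℝ) +
      !![lam, 0, -(lam * Real.sqrt lam);
         0, -lam, lam * Real.sqrt lam;
         -((Real.sqrt lam)⁻¹ * (b + 2 * n)), (Real.sqrt lam)⁻¹ * b, 2 * (n : ℝ)]) :
    M.charpoly =
      (X - C μ'') * (X - C (μ'' + n + t)) * (X - C (μ'' + n - t)) := by
  have hs : Real.sqrt lam * Real.sqrt lam = lam := Real.mul_self_sqrt hlam.le
  have hs0 : Real.sqrt lam ≠ 0 := ne_of_gt (Real.sqrt_pos.2 hlam)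
  have ht2 : t * t = (n : ℝ) ^ 2 + 2 * lam * (n + b) + lam ^ 2 := by
    rw [ht]; exact Real.mul_self_sqrt (by positivity)
  subst hM
  rw [Matrix.charpoly, Matrix.det_fin_three]
  apply Polynomial.funext
  intro x
  simp [Matrix.charmatrix_apply, Matrix.one_apply]
  field_simp
  linear_combination (x - μ'') * ht2
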